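/- The function u(x,t) = a₀ − (4ρβ₁k₁²)/(3ζ) · tanh²(k₃·x − c₃·t + A₃), where k₃ = √β₁·k₁/3 and c₃ = √β₁·k₁·(9ζa₀ − 8ρβ₁k₁²)/27, satisfies the KdV equation u_t + ζ·u·u_x + ρ·u_{xxx} = 0 for all (x,t) ∈ ℝ². -/

import Mathlib

private lemma tanh_lin_hasDerivAt (m b y : ℝ) :
    HasDerivAt (fun z => Real.tanh (m * z + b))
      ((1 - Real.tanh (m * y + b) ^ 2) * m) y := by
  have h1 : HasDerivAt (fun z : ℝ => m * z + b) m y := by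
    simpa using ((hasDerivAt_id y).const_mul m).add_const b
  set w := m * y + b with hw
  have hc : Real.cosh w ≠ 0 := (Real.cosh_pos w).ne'
  have htanh : HasDerivAt Real.tanh (1 - Real.tanh w ^ 2) w := by
    have h := (Real.hasDerivAt_sinh w).div (Real.hasDerivAt_cosh w) hc
    have heq : (Real.cosh w * Real.cosh w - Real.sinh w * Real.sinh w) / Real.cosh w ^ 2
        = 1 - Real.tanh w ^ 2 := by
      rw [Real.tanh_eq_sinh_div_cosh, div_pow]
      have hcsq : Real.cosh w ^ 2 - Real.sinh w ^ 2 = 1 := by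
        rw [Real.cosh_sq]; ring
      field_simp
    have h' : HasDerivAt (fun x => Real.sinh x / Real.cosh x) (1 - Real.tanh w ^ 2) w := by
      rwa [heq] at h
    have hfe : (fun x => Real.sinh x / Real.cosh x) = Real.tanh := by
      funext x; rw [Real.tanh_eq_sinh_div_cosh]
    rwa [hfe] at h'
  exact htanh.comp y h1

private lemma deriv0 (a₀ B m b : ℝ) :
    deriv (fun z => a₀ - B * Real.tanh (m * z + b) ^ 2)
      = fun z => m * B * (2 * Real.tanh (m * z + b) ^ 3 - 2 * Real.tanh (m * z + b)) := by
  funext y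
  have h := tanh_lin_hasDerivAt m b y
  have h2 := ((h.pow 2).const_mul B).const_sub a₀
  have := h2.deriv
  refine this.trans ?_; ring

private lemma deriv1 (B m b : ℝ) :
    deriv (fun z => m * B * (2 * Real.tanh (m * z + b) ^ 3 - 2 * Real.tanh (m * z + b)))
      = fun z => m ^ 2 * B * (-6 * Real.tanh (m * z + b) ^ 4
          + 8 * Real.tanh (m * z + b) ^ 2 - 2) := by
  funext y
  have h := tanh_lin_hasDerivAt m b y
  have h2 := (((h.pow 3).const_mul 2).sub (h.const_mul 2)).const_mul (m * B)
  have := h2.deriv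
  refine this.trans ?_; ring

private lemma deriv2 (B m b : ℝ) :
    deriv (fun z => m ^ 2 * B * (-6 * Real.tanh (m * z + b) ^ 4
          + 8 * Real.tanh (m * z + b) ^ 2 - 2))
      = fun z => m ^ 3 * B * (24 * Real.tanh (m * z + b) ^ 5
          - 40 * Real.tanh (m * z + b) ^ 3 + 16 * Real.tanh (m * z + b)) := by
  funext y
  have h := tanh_lin_hasDerivAt m b y
  have h2 := (((((h.pow 4).const_mul (-6)).add ((h.pow 2).const_mul 8)).sub_const 2).const_mul
    (m ^ 2 * B))
  have := h2.deriv
  refine this.trans ?_; ring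

theorem tanh_solitary_wave_solves_kdv (ζ ρ a₀ β₁ k₁ A₃ : ℝ)
    (hζ : ζ ≠ 0) (hβ : 0 < β₁)
    (u : ℝ → ℝ → ℝ)
    (hu : ∀ x t, u x t = a₀ - (4 * ρ * β₁ * k₁ ^ 2) / (3 * ζ)
        * Real.tanh ((Real.sqrt β₁ * k₁ / 3) * x
            - (Real.sqrt β₁ * k₁ * (9 * ζ * a₀ - 8 * ρ * β₁ * k₁ ^ 2) / 27) * t + A₃) ^ 2) :
    ∀ x t,
      deriv (fun τ => u x τ) t
        + ζ * u x t * deriv (fun y => u y t) x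
        + ρ * iteratedDeriv 3 (fun y => u y t) x = 0 := by
  intro x t
  have hs : Real.sqrt β₁ ^ 2 = β₁ := Real.sq_sqrt hβ.le
  set s := Real.sqrt β₁ with hsdef
  set B : ℝ := 4 * ρ * β₁ * k₁ ^ 2 / (3 * ζ) with hB
  set k : ℝ := s * k₁ / 3 with hk
  set c : ℝ := s * k₁ * (9 * ζ * a₀ - 8 * ρ * β₁ * k₁ ^ 2) / 27 with hc
  set bb : ℝ := -c * t + A₃ with hbb
  set T : ℝ := Real.tanh (k * x + bb) with hT
  -- x-direction function
  have hfx : (fun y => u y t) = fun y => a₀ - B * Real.tanh (k * y + bb) ^ 2 := by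
    funext y
    rw [hu]
    rw [show k * y - c * t + A₃ = k * y + bb from by rw [hbb]; ring]
  -- t-direction function
  have hft : (fun τ => u x τ) = fun τ => a₀ - B * Real.tanh ((-c) * τ + (k * x + A₃)) ^ 2 := by
    funext τ
    rw [hu]
    rw [show k * x - c * τ + A₃ = -c * τ + (k * x + A₃) from by ring]
  have hut : deriv (fun τ => u x τ) t = (-c) * B * (2 * T ^ 3 - 2 * T) := by
    rw [hft]
    simp only [deriv0]
    have harg : -c * t + (k * x + A₃) = k * x + bb := by rw [hbb]; ring
    simp only [harg]
    rfl
  have hux : deriv (fun y => u y t) x = k * B * (2 * T ^ 3 - 2 * T) := by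
    rw [hfx]
    simp only [deriv0]
    rfl
  have huxxx : iteratedDeriv 3 (fun y => u y t) x
      = k ^ 3 * B * (24 * T ^ 5 - 40 * T ^ 3 + 16 * T) := by
    rw [show (3 : ℕ) = 0 + 1 + 1 + 1 from rfl, iteratedDeriv_succ, iteratedDeriv_succ,
      iteratedDeriv_succ, iteratedDeriv_zero, hfx]
    simp only [deriv0, deriv1, deriv2]
    rfl
  have huval : u x t = a₀ - B * T ^ 2 := by
    rw [hu, hT, show k * x - c * t + A₃ = k * x + bb from by rw [hbb]; ring]
  rw [hut, hux, huxxx, huval, hB, hk, hc, ← hs]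
  field_simp
  ring
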